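/- Let 0 < t1 < t2 < t3 < t4 and 0 < x1 < x2 < x3 < x4, and let (t1, t4) be a crossing by R∘S of (x1, x4). Set (k1, k4) := (S(t1), S(t4)) (which is a crossing by R of (x1, x4)). Then (t2, t3) is the first crossing by R∘S of (x2, x3) during (t1, t4) if and only if (t2, t3) is the first crossing by S during (t1, t4) of (k2, k3), where (k2, k3) is the first crossing by R of (x2, x3) during (k1, k4). -/

import Mathlib

/-- `(t1, t2)` is a crossing by `T` of the ordered pair `(x1, x2)`. -/
def IsCrossing {α : Type*} [LinearOrder α] (T : α → ℤ) (t1 t2 : α) (x1 x2 : ℤ) : Prop :=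
  x1 ≠ x2 ∧ T t1 = x1 ∧ T t2 = x2 ∧
    ∀ t, min t1 t2 < t → t < max t1 t2 → min x1 x2 < T t ∧ T t < max x1 x2

/-- `(s1, s2)` is the first crossing by `T : ℕ → ℤ` of `(x3, x4)` during the crossing
`(t1, t2)`: it is a crossing of `(x3, x4)` lying in `[min t1 t2, max t1 t2]` and,
among all such crossings, it is the one closest to `t1`. -/
def IsFirstCrossingDuringN (T : ℕ → ℤ) (t1 t2 s1 s2 : ℕ) (x3 x4 : ℤ) : Prop :=
  IsCrossing T s1 s2 x3 x4 ∧ min t1 t2 ≤ min s1 s2 ∧ max s1 s2 ≤ max t1 t2 ∧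
    ∀ u1 u2 : ℕ, IsCrossing T u1 u2 x3 x4 → min t1 t2 ≤ min u1 u2 → max u1 u2 ≤ max t1 t2 →
      Nat.dist s1 t1 ≤ Nat.dist u1 t1

/-- `(s1, s2)` is the first crossing by `T : ℤ → ℤ` of `(x3, x4)` during the crossing
`(t1, t2)`. -/
def IsFirstCrossingDuringZ (T : ℤ → ℤ) (t1 t2 s1 s2 : ℤ) (x3 x4 : ℤ) : Prop :=
  IsCrossing T s1 s2 x3 x4 ∧ min t1 t2 ≤ min s1 s2 ∧ max s1 s2 ≤ max t1 t2 ∧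
    ∀ u1 u2 : ℤ, IsCrossing T u1 u2 x3 x4 → min t1 t2 ≤ min u1 u2 → max u1 u2 ≤ max t1 t2 →
      (s1 - t1).natAbs ≤ (u1 - t1).natAbs

namespace FCAux

/-- IVT (increasing orientation) for nearest-neighbor walks on ℕ. -/
lemma ivtN (S : ℕ → ℤ) (hS : ∀ t, |S (t + 1) - S t| = 1) :
    ∀ q p, p ≤ q → ∀ c : ℤ, S p ≤ c → c ≤ S q → ∃ r, p ≤ r ∧ r ≤ q ∧ S r = c := by
  intro q
  induction q with
  | zero =>
    intro p hp c h1 h2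
    have hp0 : p = 0 := by omega
    subst hp0
    exact ⟨0, le_refl _, le_refl _, by omega⟩
  | succ q ih =>
    intro p hp c h1 h2
    rcases Nat.lt_or_ge p (q + 1) with h | h
    · have hpq : p ≤ q := by omega
      rcases le_or_gt c (S q) with hc | hc
      · obtain ⟨r, hr1, hr2, hr3⟩ := ih p hpq c h1 hc
        exact ⟨r, hr1, by omega, hr3⟩
      · have h' : S (q + 1) - S q = 1 ∨ S (q + 1) - S q = -1 :=
          (abs_eq (by norm_num)).mp (hS q)
        exact ⟨q + 1, by omega, le_refl _, by omega⟩
    · have hpe : p = q + 1 := by omega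
      subst hpe
      exact ⟨q + 1, le_refl _, le_refl _, by omega⟩

/-- IVT (decreasing orientation) for nearest-neighbor walks on ℕ. -/
lemma ivtN' (S : ℕ → ℤ) (hS : ∀ t, |S (t + 1) - S t| = 1) {p q : ℕ} (hpq : p ≤ q)
    {c : ℤ} (h1 : c ≤ S p) (h2 : S q ≤ c) : ∃ r, p ≤ r ∧ r ≤ q ∧ S r = c := by
  have hS' : ∀ t, |(fun t => -S t) (t + 1) - (fun t => -S t) t| = 1 := by
    intro t
    have h := hS t
    have e : (fun t => -S t) (t + 1) - (fun t => -S t) t = -(S (t + 1) - S t) := by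
      simp; ring
    rw [e, abs_neg]; exact h
  obtain ⟨r, hr1, hr2, hr3⟩ := ivtN (fun t => -S t) hS' q p hpq (-c) (by simp; omega) (by simp; omega)
  refine ⟨r, hr1, hr2, ?_⟩
  have : -S r = -c := hr3
  omega

/-- IVT (increasing orientation) for nearest-neighbor walks on ℤ. -/
lemma ivtZ (R : ℤ → ℤ) (hR : ∀ k, |R (k + 1) - R k| = 1) {p q : ℤ} (hpq : p ≤ q)
    {c : ℤ} (h1 : R p ≤ c) (h2 : c ≤ R q) : ∃ r, p ≤ r ∧ r ≤ q ∧ R r = c := by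
  have hT : ∀ n : ℕ, |(fun n : ℕ => R (p + n)) (n + 1) - (fun n : ℕ => R (p + n)) n| = 1 := by
    intro n
    have := hR (p + n)
    simpa [add_assoc] using this
  have hq : ((q - p).toNat : ℤ) = q - p := Int.toNat_of_nonneg (by omega)
  have hTq : (fun n : ℕ => R (p + n)) ((q - p).toNat) = R q := by
    simp only []
    rw [hq]; ring_nf
  obtain ⟨r, hr1, hr2, hr3⟩ := ivtN (fun n : ℕ => R (p + n)) hT (q - p).toNat 0 (by omega) c
    (by simpa using h1) (by rw [← hTq] at h2; exact h2)
  refine ⟨p + r, by omega, by omega, hr3⟩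


/-- Traversal lemma on ℕ: a walk going from below `y` to (weakly) above `z` performs a
crossing of `(y, z)`. -/
lemma crossingN_exists (S : ℕ → ℤ) (hS : ∀ t, |S (t + 1) - S t| = 1) {p q : ℕ} (hpq : p ≤ q)
    {y z : ℤ} (hyz : y < z) (h1 : S p < y) (h2 : z ≤ S q) :
    ∃ w1 w2, IsCrossing S w1 w2 y z ∧ p < w1 ∧ w1 < w2 ∧ w2 ≤ q := by
  classical
  obtain ⟨b0, hb01, hb02, hb03⟩ := ivtN S hS q p hpq z (by omega) h2
  set B : Finset ℕ := (Finset.Icc p q).filter (fun t => S t = z) with hB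
  have hBne : B.Nonempty := ⟨b0, by simp [hB, Finset.mem_Icc]; exact ⟨⟨hb01, hb02⟩, hb03⟩⟩
  set b := B.min' hBne with hbdef
  have hbB : b ∈ B := Finset.min'_mem _ _
  have hbIcc : (p ≤ b ∧ b ≤ q) ∧ S b = z := by simpa [hB, Finset.mem_Icc] using hbB
  have hbmin : ∀ t, p ≤ t → t ≤ q → S t = z → b ≤ t := by
    intro t h h' hz
    exact Finset.min'_le _ _ (by simp [hB, Finset.mem_Icc]; exact ⟨⟨h, h'⟩, hz⟩)
  obtain ⟨a0, ha01, ha02, ha03⟩ := ivtN S hS b p hbIcc.1.1 y (by omega) (by omega)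
  set A : Finset ℕ := (Finset.Icc p b).filter (fun t => S t = y) with hA
  have hAne : A.Nonempty := ⟨a0, by simp [hA, Finset.mem_Icc]; exact ⟨⟨ha01, ha02⟩, ha03⟩⟩
  set a := A.max' hAne with hadef
  have haA : a ∈ A := Finset.max'_mem _ _
  have haIcc : (p ≤ a ∧ a ≤ b) ∧ S a = y := by simpa [hA, Finset.mem_Icc] using haA
  have hamax : ∀ t, p ≤ t → t ≤ b → S t = y → t ≤ a := by
    intro t h h' hz
    exact Finset.le_max' _ _ (by simp [hA, Finset.mem_Icc]; exact ⟨⟨h, h'⟩, hz⟩)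
  have hSa : S a = y := haIcc.2
  have hSb : S b = z := hbIcc.2
  have hab : a < b := by
    rcases Nat.lt_or_ge a b with h | h
    · exact h
    · exfalso; have : a = b := by omega
      rw [this, hSb] at hSa; omega
  have hpa : p < a := by
    rcases Nat.lt_or_ge p a with h | h
    · exact h
    · exfalso; have : a = p := by omega
      rw [this] at hSa; omega
  refine ⟨a, b, ⟨by omega, hSa, hSb, ?_⟩, hpa, hab, hbIcc.1.2⟩
  intro t ht1 ht2
  rw [min_eq_left hab.le] at ht1
  rw [max_eq_right hab.le] at ht2
  have hminyz : min y z = y := min_eq_left hyz.le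
  have hmaxyz : max y z = z := max_eq_right hyz.le
  rw [hminyz, hmaxyz]
  constructor
  · by_contra hle
    push_neg at hle
    obtain ⟨s, hs1, hs2, hs3⟩ := ivtN S hS b t ht2.le y hle (by omega)
    have := hamax s (by omega) hs2 hs3
    omega
  · by_contra hge
    push_neg at hge
    obtain ⟨s, hs1, hs2, hs3⟩ := ivtN S hS t p (by omega) z (by omega) hge
    have := hbmin s hs1 (by omega) hs3
    omega

/-- Traversal lemma on ℤ. -/
lemma crossingZ_exists (R : ℤ → ℤ) (hR : ∀ k, |R (k + 1) - R k| = 1) {p q : ℤ} (hpq : p ≤ q)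
    {y z : ℤ} (hyz : y < z) (h1 : R p < y) (h2 : z ≤ R q) :
    ∃ w1 w2, IsCrossing R w1 w2 y z ∧ p < w1 ∧ w1 < w2 ∧ w2 ≤ q := by
  classical
  obtain ⟨b0, hb01, hb02, hb03⟩ := ivtZ R hR hpq (by omega) h2
  set B : Finset ℤ := (Finset.Icc p q).filter (fun t => R t = z) with hB
  have hBne : B.Nonempty := ⟨b0, by simp [hB, Finset.mem_Icc]; exact ⟨⟨hb01, hb02⟩, hb03⟩⟩
  set b := B.min' hBne with hbdef
  have hbB : b ∈ B := Finset.min'_mem _ _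
  have hbIcc : (p ≤ b ∧ b ≤ q) ∧ R b = z := by simpa [hB, Finset.mem_Icc] using hbB
  have hbmin : ∀ t, p ≤ t → t ≤ q → R t = z → b ≤ t := by
    intro t h h' hz
    exact Finset.min'_le _ _ (by simp [hB, Finset.mem_Icc]; exact ⟨⟨h, h'⟩, hz⟩)
  obtain ⟨a0, ha01, ha02, ha03⟩ := ivtZ R hR hbIcc.1.1 (c := y) (by omega) (by omega)
  set A : Finset ℤ := (Finset.Icc p b).filter (fun t => R t = y) with hA
  have hAne : A.Nonempty := ⟨a0, by simp [hA, Finset.mem_Icc]; exact ⟨⟨ha01, ha02⟩, ha03⟩⟩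
  set a := A.max' hAne with hadef
  have haA : a ∈ A := Finset.max'_mem _ _
  have haIcc : (p ≤ a ∧ a ≤ b) ∧ R a = y := by simpa [hA, Finset.mem_Icc] using haA
  have hamax : ∀ t, p ≤ t → t ≤ b → R t = y → t ≤ a := by
    intro t h h' hz
    exact Finset.le_max' _ _ (by simp [hA, Finset.mem_Icc]; exact ⟨⟨h, h'⟩, hz⟩)
  have hSa : R a = y := haIcc.2
  have hSb : R b = z := hbIcc.2
  have hab : a < b := by
    rcases lt_or_ge a b with h | h
    · exact h
    · exfalso; have : a = b := by omega
      rw [this, hSb] at hSa; omega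
  have hpa : p < a := by
    rcases lt_or_ge p a with h | h
    · exact h
    · exfalso; have : a = p := by omega
      rw [this] at hSa; omega
  refine ⟨a, b, ⟨by omega, hSa, hSb, ?_⟩, hpa, hab, hbIcc.1.2⟩
  intro t ht1 ht2
  rw [min_eq_left hab.le] at ht1
  rw [max_eq_right hab.le] at ht2
  rw [min_eq_left hyz.le, max_eq_right hyz.le]
  constructor
  · by_contra hle
    push_neg at hle
    obtain ⟨s, hs1, hs2, hs3⟩ := ivtZ R hR (p := t) (q := b) ht2.le hle (by omega)
    have := hamax s (by omega) hs2 hs3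
    omega
  · by_contra hge
    push_neg at hge
    obtain ⟨s, hs1, hs2, hs3⟩ := ivtZ R hR (p := p) (q := t) (by omega) (by omega) hge
    have := hbmin s hs1 (by omega) hs3
    omega


lemma crossing_symm {α : Type*} [LinearOrder α] {T : α → ℤ} {a b : α} {x y : ℤ}
    (h : IsCrossing T a b x y) : IsCrossing T b a y x := by
  obtain ⟨h1, h2, h3, h4⟩ := h
  refine ⟨h1.symm, h3, h2, fun t p q => ?_⟩
  rw [min_comm y x, max_comm y x]
  exact h4 t (by rwa [min_comm b a] at p) (by rwa [max_comm b a] at q)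

/-- A walk whose interior avoids both endpoint values stays strictly between them. -/
lemma walk_between (S : ℕ → ℤ) (hS : ∀ t, |S (t + 1) - S t| = 1) {p q : ℕ} (hpq : p ≤ q)
    (hne : S p ≠ S q) (h : ∀ t, p < t → t < q → S t ≠ S p ∧ S t ≠ S q) :
    ∀ t, p < t → t < q → min (S p) (S q) < S t ∧ S t < max (S p) (S q) := by
  have upper : ∀ t, p < t → t < q → S t < max (S p) (S q) := by
    intro t h1 h2
    by_contra hge
    push_neg at hge
    have hne2 := h t h1 h2
    rcases lt_or_gt_of_ne hne with hc | hc
    · -- S p < S q, max = S q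
      obtain ⟨s, hs1, hs2, hs3⟩ := ivtN S hS t p (by omega) (S q) (by omega) (by omega)
      have hsp : s ≠ p := by intro e; rw [e] at hs3; omega
      have hsq : s ≠ t := by intro e; rw [e] at hs3; omega
      exact (h s (by omega) (by omega)).2 hs3
    · -- S q < S p, max = S p
      obtain ⟨s, hs1, hs2, hs3⟩ := ivtN' S hS (p := t) (q := q) (by omega) (c := S p) (by omega) (by omega)
      have hsq : s ≠ q := by intro e; rw [e] at hs3; omega
      have hst : s ≠ t := by intro e; rw [e] at hs3; omega
      exact (h s (by omega) (by omega)).1 hs3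
  have lower : ∀ t, p < t → t < q → min (S p) (S q) < S t := by
    intro t h1 h2
    by_contra hle
    push_neg at hle
    have hne2 := h t h1 h2
    rcases lt_or_gt_of_ne hne with hc | hc
    · -- S p < S q, min = S p
      obtain ⟨s, hs1, hs2, hs3⟩ := ivtN S hS q t (by omega) (S p) (by omega) (by omega)
      have hsq : s ≠ q := by intro e; rw [e] at hs3; omega
      have hst : s ≠ t := by intro e; rw [e] at hs3; omega
      exact (h s (by omega) (by omega)).1 hs3
    · -- S q < S p, min = S q
      obtain ⟨s, hs1, hs2, hs3⟩ := ivtN' S hS (p := p) (q := t) (by omega) (c := S q) (by omega) (by omega)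
      have hsp : s ≠ p := by intro e; rw [e] at hs3; omega
      have hst : s ≠ t := by intro e; rw [e] at hs3; omega
      exact (h s (by omega) (by omega)).2 hs3
  exact fun t a b => ⟨lower t a b, upper t a b⟩

lemma lift_crossing_le (R : ℤ → ℤ) (S : ℕ → ℤ) (hS : ∀ t, |S (t + 1) - S t| = 1)
    {u v : ℕ} {x y : ℤ} (huv : u ≤ v) (hc : IsCrossing (fun t => R (S t)) u v x y) :
    IsCrossing S u v (S u) (S v) ∧ IsCrossing R (S u) (S v) x y := by
  obtain ⟨hxy, hx, hy, hint⟩ := hc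
  have hx' : R (S u) = x := hx
  have hy' : R (S v) = y := hy
  have hint' : ∀ t, u < t → t < v → min x y < R (S t) ∧ R (S t) < max x y := by
    intro t a b
    exact hint t (by rw [min_eq_left huv]; exact a) (by rw [max_eq_right huv]; exact b)
  have hSuv : S u ≠ S v := by
    intro h
    apply hxy
    rw [← hx', ← hy', h]
  have hne : ∀ t, u < t → t < v → S t ≠ S u ∧ S t ≠ S v := by
    intro t a b
    have h4 := hint' t a b
    constructor
    · intro h; rw [h, hx'] at h4; omega
    · intro h; rw [h, hy'] at h4; omega
  have hbet := walk_between S hS huv hSuv hne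
  constructor
  · refine ⟨hSuv, rfl, rfl, fun t a b => ?_⟩
    exact hbet t (by rw [min_eq_left huv] at a; exact a) (by rw [max_eq_right huv] at b; exact b)
  · refine ⟨hxy, hx', hy', fun k a b => ?_⟩
    rcases le_total (S u) (S v) with hc2 | hc2
    · obtain ⟨s, hs1, hs2, hs3⟩ := ivtN S hS v u huv k
        (by rw [min_eq_left hc2] at a; omega) (by rw [max_eq_right hc2] at b; omega)
      have hsu : s ≠ u := by intro e; rw [e] at hs3; omega
      have hsv : s ≠ v := by intro e; rw [e] at hs3; omega
      rw [← hs3]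
      exact hint' s (by omega) (by omega)
    · obtain ⟨s, hs1, hs2, hs3⟩ := ivtN' S hS (p := u) (q := v) huv (c := k)
        (by rw [max_eq_left hc2] at b; omega) (by rw [min_eq_right hc2] at a; omega)
      have hsu : s ≠ u := by intro e; rw [e] at hs3; omega
      have hsv : s ≠ v := by intro e; rw [e] at hs3; omega
      rw [← hs3]
      exact hint' s (by omega) (by omega)

lemma lift_crossing (R : ℤ → ℤ) (S : ℕ → ℤ) (hS : ∀ t, |S (t + 1) - S t| = 1)
    {u v : ℕ} {x y : ℤ} (hc : IsCrossing (fun t => R (S t)) u v x y) :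
    IsCrossing S u v (S u) (S v) ∧ IsCrossing R (S u) (S v) x y := by
  rcases le_total u v with h | h
  · exact lift_crossing_le R S hS h hc
  · obtain ⟨h1, h2⟩ := lift_crossing_le R S hS h (crossing_symm hc)
    exact ⟨crossing_symm h1, crossing_symm h2⟩

lemma push_crossing {R : ℤ → ℤ} {S : ℕ → ℤ} {a b x y : ℤ} {w1 w2 : ℕ}
    (hRc : IsCrossing R a b x y) (hSc : IsCrossing S w1 w2 a b) :
    IsCrossing (fun t => R (S t)) w1 w2 x y := by
  obtain ⟨hxy, hx, hy, hint⟩ := hRc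
  obtain ⟨hab, ha, hb, hint'⟩ := hSc
  refine ⟨hxy, ?_, ?_, fun t p q => ?_⟩
  · show R (S w1) = x; rw [ha]; exact hx
  · show R (S w2) = y; rw [hb]; exact hy
  · have h2 := hint' t p q
    exact hint (S t) h2.1 h2.2


theorem aux (R : ℤ → ℤ) (S : ℕ → ℤ)
    (hR : ∀ k : ℤ, |R (k + 1) - R k| = 1) (hS : ∀ t : ℕ, |S (t + 1) - S t| = 1)
    (t1 t2 t3 t4 : ℕ) (x1 x2 x3 x4 : ℤ)
    (ht12 : t1 < t2) (ht23 : t2 < t3) (ht34 : t3 < t4)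
    (hx12 : x1 < x2) (hx23 : x2 < x3) (hx34 : x3 < x4)
    (hcross : IsCrossing (fun t => R (S t)) t1 t4 x1 x4)
    (k2 k3 : ℤ) (hk : IsFirstCrossingDuringZ R (S t1) (S t4) k2 k3 x2 x3)
    (hdir : S t1 < S t4) :
    IsFirstCrossingDuringN (fun t => R (S t)) t1 t4 t2 t3 x2 x3 ↔
      IsFirstCrossingDuringN S t1 t4 t2 t3 k2 k3 := by
  obtain ⟨hScross, hRcross⟩ := lift_crossing R S hS hcross
  obtain ⟨hx14, hRk1, hRk4, hR14⟩ := hRcross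
  obtain ⟨hk23c, hkmin1, hkmax1, hkmin⟩ := hk
  obtain ⟨hx23', hRk2, hRk3, hR23⟩ := id hk23c
  -- basic bounds on k2 k3
  have hb1 : S t1 < k2 := by
    have h2 : k2 ≠ S t1 := by intro h; rw [h, hRk1] at hRk2; omega
    omega
  have hb2 : S t1 < k3 := by
    have h2 : k3 ≠ S t1 := by intro h; rw [h, hRk1] at hRk3; omega
    omega
  have hb3 : k2 < S t4 := by
    have h2 : k2 ≠ S t4 := by intro h; rw [h, hRk4] at hRk2; omega
    omega
  have hb4 : k3 < S t4 := by
    have h2 : k3 ≠ S t4 := by intro h; rw [h, hRk4] at hRk3; omega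
    omega
  -- no x3-value strictly between k1 and k2
  have closer : ∀ m : ℤ, S t1 < m → m < k2 → R m = x3 → False := by
    intro m hm1 hm2 hm3
    obtain ⟨a, b, hab, hpa, habl, hbq⟩ :=
      crossingZ_exists R hR (le_of_lt hm1) hx23 (by omega) (by omega)
    have := hkmin a b hab (by omega) (by omega)
    omega
  have hk23 : k2 < k3 := by
    have h2 : k2 ≠ k3 := by intro h; rw [h, hRk3] at hRk2; omega
    rcases lt_or_gt_of_ne h2 with h | h
    · exact h
    · exact absurd (closer k3 hb2 h hRk3) (fun f => f)
  -- range of S on [t1, t4]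
  have hrange : ∀ t, t1 ≤ t → t ≤ t4 → S t1 ≤ S t ∧ S t ≤ S t4 := by
    intro t h1 h2
    obtain ⟨hne0, -, -, hint0⟩ := hScross
    rcases Nat.eq_or_lt_of_le h1 with h | h
    · rw [← h]; omega
    · rcases Nat.eq_or_lt_of_le h2 with h' | h'
      · rw [h']; omega
      · have := hint0 t (by omega) (by omega)
        omega
  -- key dichotomy for competitor crossings of (x2, x3) by R ∘ S
  have keyD : ∀ u1 u2 : ℕ, IsCrossing (fun t => R (S t)) u1 u2 x2 x3 →
      t1 ≤ min u1 u2 → max u1 u2 ≤ t4 → IsCrossing S u1 u2 k2 k3 ∨ k3 < S u1 := by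
    intro u1 u2 hu hu1 hu2
    obtain ⟨hSu, hRu⟩ := lift_crossing R S hS hu
    obtain ⟨hm12, hRm1, hRm2, hRmint⟩ := id hRu
    have hr1 := hrange u1 (by omega) (by omega)
    have hr2 := hrange u2 (by omega) (by omega)
    have hmin := hkmin (S u1) (S u2) hRu (by omega) (by omega)
    have hm1k2 : k2 ≤ S u1 := by omega
    rcases eq_or_lt_of_le hm1k2 with he | hlt
    · left
      have hm2a : S t1 < S u2 := by
        have h2 : S u2 ≠ S t1 := by intro h; rw [h, hRk1] at hRm2; omega
        omega
      have hm2b : ¬ S u2 < k2 := fun h => closer (S u2) hm2a h hRm2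
      have hm2c : S u2 ≠ k2 := by intro h; rw [h, hRk2] at hRm2; omega
      have hm2d : ¬ (k2 < S u2 ∧ S u2 < k3) := by
        rintro ⟨a, b⟩
        have := hR23 (S u2) (by omega) (by omega)
        omega
      have hm2e : ¬ k3 < S u2 := by
        intro h
        have := hRmint k3 (by omega) (by omega)
        omega
      have hm2 : S u2 = k3 := by omega
      rw [he, ← hm2]
      exact hSu
    · right
      have h2 : S u1 ≠ k3 := by intro h; rw [h, hRk3] at hRm1; omega
      have h3 : ¬ (k2 < S u1 ∧ S u1 < k3) := by
        rintro ⟨a, b⟩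
        have := hR23 (S u1) (by omega) (by omega)
        omega
      omega
  constructor
  · rintro ⟨hc1, hc2, hc3, hcmin⟩
    have hst : IsCrossing S t2 t3 k2 k3 := by
      rcases keyD t2 t3 hc1 (by omega) (by omega) with h | h
      · exact h
      · exfalso
        obtain ⟨w1, w2, hw, hw1, hw2, hw3⟩ :=
          crossingN_exists S hS (le_of_lt ht12) hk23 (by omega) (by omega)
        have := hcmin w1 w2 (push_crossing hk23c hw) (by omega) (by omega)
        simp [Nat.dist] at this
        omega
    refine ⟨hst, hc2, hc3, ?_⟩
    intro u1 u2 hu h1 h2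
    exact hcmin u1 u2 (push_crossing hk23c hu) h1 h2
  · rintro ⟨hc1, hc2, hc3, hcmin⟩
    refine ⟨push_crossing hk23c hc1, hc2, hc3, ?_⟩
    intro u1 u2 hu h1 h2
    rcases keyD u1 u2 hu (by omega) (by omega) with h | h
    · exact hcmin u1 u2 h h1 h2
    · obtain ⟨w1, w2, hw, hw1, hw2, hw3⟩ :=
        crossingN_exists S hS (show t1 ≤ u1 by omega) hk23 (by omega) (by omega)
      have := hcmin w1 w2 hw (by omega) (by omega)
      simp [Nat.dist] at this ⊢
      omega


lemma crossing_neg_val {S : ℕ → ℤ} {a b : ℕ} {y z : ℤ} :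
    IsCrossing (fun t => -S t) a b (-y) (-z) ↔ IsCrossing S a b y z := by
  constructor
  · rintro ⟨h1, h2, h3, h4⟩
    have h2' : -S a = -y := h2
    have h3' : -S b = -z := h3
    refine ⟨by omega, by omega, by omega, fun t p q => ?_⟩
    have h5 : min (-y) (-z) < -S t ∧ -S t < max (-y) (-z) := h4 t p q
    omega
  · rintro ⟨h1, h2, h3, h4⟩
    refine ⟨by omega, ?_, ?_, fun t p q => ?_⟩
    · show -S a = -y; omega
    · show -S b = -z; omega
    · have h5 := h4 t p q
      show min (-y) (-z) < -S t ∧ -S t < max (-y) (-z)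
      omega

lemma firstN_neg_val {S : ℕ → ℤ} {p q s1 s2 : ℕ} {y z : ℤ} :
    IsFirstCrossingDuringN (fun t => -S t) p q s1 s2 (-y) (-z) ↔
      IsFirstCrossingDuringN S p q s1 s2 y z := by
  unfold IsFirstCrossingDuringN
  simp only [crossing_neg_val]

lemma crossing_neg_dom {R : ℤ → ℤ} {a b x y : ℤ} :
    IsCrossing (fun k => R (-k)) a b x y ↔ IsCrossing R (-a) (-b) x y := by
  constructor
  · rintro ⟨h1, h2, h3, h4⟩
    refine ⟨h1, h2, h3, fun t p q => ?_⟩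
    have h5 : min x y < (fun k => R (-k)) (-t) ∧ (fun k => R (-k)) (-t) < max x y :=
      h4 (-t) (by omega) (by omega)
    simpa using h5
  · rintro ⟨h1, h2, h3, h4⟩
    refine ⟨h1, h2, h3, fun t p q => ?_⟩
    show min x y < R (-t) ∧ R (-t) < max x y
    exact h4 (-t) (by omega) (by omega)

lemma firstZ_neg_dom {R : ℤ → ℤ} {a b c d x y : ℤ}
    (h : IsFirstCrossingDuringZ R a b c d x y) :
    IsFirstCrossingDuringZ (fun k => R (-k)) (-a) (-b) (-c) (-d) x y := by
  obtain ⟨h1, h2, h3, h4⟩ := h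
  refine ⟨?_, by omega, by omega, ?_⟩
  · rw [crossing_neg_dom]
    simpa using h1
  · intro u1 u2 hu r1 r2
    have hu' : IsCrossing R (-u1) (-u2) x y := crossing_neg_dom.mp hu
    have := h4 (-u1) (-u2) hu' (by omega) (by omega)
    omega

end FCAux

/-- Lemma 7: first crossings by `R ∘ S` correspond to first crossings by `S` of first
crossings by `R`. -/
theorem first_crossing_comp_iff
    (R : ℤ → ℤ) (S : ℕ → ℤ)
    (hR : ∀ k : ℤ, |R (k + 1) - R k| = 1)
    (hS : ∀ t : ℕ, |S (t + 1) - S t| = 1)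
    (t1 t2 t3 t4 : ℕ) (x1 x2 x3 x4 : ℤ)
    (ht1 : 0 < t1) (ht12 : t1 < t2) (ht23 : t2 < t3) (ht34 : t3 < t4)
    (hx1 : 0 < x1) (hx12 : x1 < x2) (hx23 : x2 < x3) (hx34 : x3 < x4)
    (hcross : IsCrossing (fun t => R (S t)) t1 t4 x1 x4)
    (k2 k3 : ℤ)
    (hk : IsFirstCrossingDuringZ R (S t1) (S t4) k2 k3 x2 x3) :
    IsFirstCrossingDuringN (fun t => R (S t)) t1 t4 t2 t3 x2 x3 ↔
      IsFirstCrossingDuringN S t1 t4 t2 t3 k2 k3 := by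
  have hne : S t1 ≠ S t4 := by
    intro h
    have h1 : R (S t1) = x1 := hcross.2.1
    have h4 : R (S t4) = x4 := hcross.2.2.1
    rw [h, h4] at h1
    omega
  rcases lt_or_gt_of_ne hne with hdir | hdir
  · exact FCAux.aux R S hR hS t1 t2 t3 t4 x1 x2 x3 x4 ht12 ht23 ht34 hx12 hx23 hx34
      hcross k2 k3 hk hdir
  · have hR' : ∀ k : ℤ, |(fun k => R (-k)) (k + 1) - (fun k => R (-k)) k| = 1 := by
      intro k
      show |R (-(k + 1)) - R (-k)| = 1
      rw [abs_sub_comm]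
      have h := hR (-(k + 1))
      rwa [show (-(k + 1) + 1 : ℤ) = -k by ring] at h
    have hS' : ∀ t : ℕ, |(fun t => -S t) (t + 1) - (fun t => -S t) t| = 1 := by
      intro t
      show |-S (t + 1) - -S t| = 1
      rw [show -S (t + 1) - -S t = -(S (t + 1) - S t) by ring, abs_neg]
      exact hS t
    have hcross' : IsCrossing (fun t => (fun k => R (-k)) ((fun t => -S t) t)) t1 t4 x1 x4 := by
      simp only [neg_neg]
      exact hcross
    have hk' : IsFirstCrossingDuringZ (fun k => R (-k)) ((fun t => -S t) t1)
        ((fun t => -S t) t4) (-k2) (-k3) x2 x3 := FCAux.firstZ_neg_dom hk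
    have hmain := FCAux.aux (fun k => R (-k)) (fun t => -S t) hR' hS' t1 t2 t3 t4 x1 x2 x3 x4
      ht12 ht23 ht34 hx12 hx23 hx34 hcross' (-k2) (-k3) hk' (by show -S t1 < -S t4; omega)
    rw [FCAux.firstN_neg_val] at hmain
    simp only [neg_neg] at hmain
    exact hmain
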